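/- Let A be a noetherian, locally finite, ℕ-graded prime projectively simple k-algebra, let n ≥ 2, and let B = A^{(n)} = ⊕_{i≥0} A_{ni} be the n-th Veronese subring (graded by B_i = A_{ni}). If B is a prime ring and A is finitely generated as a right B-module or as a left B-module, then B is projectively simple. -/

import Mathlib

/-!
STATEMENT 9: Let `A` be a noetherian, locally finite, ℕ-graded prime projectively simple
`k`-algebra, let `n ≥ 2`, and let `B = A^{(n)} = ⊕_{i≥0} A_{ni}` be the `n`-th Veronese
subring (graded by `Bᵢ = A_{ni}`).  If `B` is a prime ring and `A` is finitely generated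
as a right `B`-module or as a left `B`-module, then `B` is projectively simple.

`B` is specified as the subalgebra of `A` whose elements are exactly those all of whose
homogeneous components of degree not divisible by `n` vanish; with this description
the grading `Bᵢ = A_{ni}` is the restriction of the grading of `A`, and a two-sided
ideal `I ⊆ B` is graded for it iff it is closed under taking homogeneous components
with respect to the grading of `A`.  Projective simplicity of a graded subalgebra
`B ⊆ A` is expressed internally to `A`; taking `B = ⊤` recovers projective simplicity
of `A` itself.
-/

/-- Projective simplicity of a graded subalgebra `B` of the ℕ-graded `k`-algebra `A`,
with grading `Bₙ = B ∩ Aₙ`. -/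
def SubProjSimple {k A : Type*} [Field k] [Ring A] [Algebra k A]
    (𝒜 : ℕ → Submodule k A) [GradedAlgebra 𝒜] (B : Subalgebra k A) : Prop :=
  ¬ FiniteDimensional k B ∧
  ∀ I : Submodule k A, I ≤ B.toSubmodule → I ≠ ⊥ →
    (∀ b ∈ B, ∀ x ∈ I, b * x ∈ I ∧ x * b ∈ I) →
    (∀ x ∈ I, ∀ n, (DirectSum.decompose 𝒜 x n : A) ∈ I) →
    FiniteDimensional k (↥B.toSubmodule ⧸ (I.comap B.toSubmodule.subtype))

section Helpers

variable {k A : Type*} [Field k] [Ring A] [Algebra k A]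
variable (𝒜 : ℕ → Submodule k A) [GradedAlgebra 𝒜]

/-- the `m`-th component, as a linear endomorphism of `A`. -/
private def Lm (m : ℕ) : A →ₗ[k] A where
  toFun y := (DirectSum.decompose 𝒜 y m : A)
  map_add' x y := by
    show (DirectSum.decompose 𝒜 (x + y) m : A)
      = (DirectSum.decompose 𝒜 x m : A) + (DirectSum.decompose 𝒜 y m : A)
    rw [DirectSum.decompose_add]; simp
  map_smul' r x := by
    show (DirectSum.decompose 𝒜 (r • x) m : A) = r • (DirectSum.decompose 𝒜 x m : A)
    rw [DirectSum.decompose_smul]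
    rw [DirectSum.smul_apply]
    simp

private lemma Lm_apply (m : ℕ) (y : A) : Lm 𝒜 m y = (DirectSum.decompose 𝒜 y m : A) := rfl

private lemma dec_sum {ι : Type*} (s : Finset ι) (f : ι → A) (m : ℕ) :
    (DirectSum.decompose 𝒜 (∑ i ∈ s, f i) m : A)
      = ∑ i ∈ s, (DirectSum.decompose 𝒜 (f i) m : A) := by
  exact map_sum (Lm 𝒜 m) f s

private lemma leftHomog {l : ℕ} {t : A} (ht : t ∈ 𝒜 l) (y : A) (m : ℕ) :
    (DirectSum.decompose 𝒜 (t * y) m : A)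
      = if l ≤ m then t * (DirectSum.decompose 𝒜 y (m - l) : A) else 0 := by
  classical
  have key : t * y = ∑ j ∈ DFinsupp.support (DirectSum.decompose 𝒜 y),
      t * (DirectSum.decompose 𝒜 y j : A) := by
    rw [← Finset.mul_sum, DirectSum.sum_support_decompose]
  rw [key, dec_sum]
  have hterm : ∀ j : ℕ, (DirectSum.decompose 𝒜 (t * (DirectSum.decompose 𝒜 y j : A)) m : A)
      = if l + j = m then t * (DirectSum.decompose 𝒜 y j : A) else 0 := by
    intro j
    have hmem : t * (DirectSum.decompose 𝒜 y j : A) ∈ 𝒜 (l + j) :=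
      SetLike.mul_mem_graded ht (SetLike.coe_mem _)
    split_ifs with h
    · rw [← h]; exact DirectSum.decompose_of_mem_same 𝒜 hmem
    · exact DirectSum.decompose_of_mem_ne 𝒜 hmem h
  simp_rw [hterm]
  by_cases hlm : l ≤ m
  · have hcond : ∀ j : ℕ, (l + j = m) = (j = m - l) := by
      intro j; apply propext; omega
    simp_rw [hcond]
    rw [Finset.sum_ite_eq' (DFinsupp.support (DirectSum.decompose 𝒜 y)) (m - l)
      (fun j => t * (DirectSum.decompose 𝒜 y j : A))]
    rw [if_pos hlm]
    split_ifs with hmem2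
    · rfl
    · rw [DFinsupp.notMem_support_iff.mp hmem2]; simp
  · rw [if_neg hlm]
    apply Finset.sum_eq_zero; intro j _; rw [if_neg]; omega

private lemma rightHomog {l : ℕ} {t : A} (ht : t ∈ 𝒜 l) (y : A) (m : ℕ) :
    (DirectSum.decompose 𝒜 (y * t) m : A)
      = if l ≤ m then (DirectSum.decompose 𝒜 y (m - l) : A) * t else 0 := by
  classical
  have key : y * t = ∑ j ∈ DFinsupp.support (DirectSum.decompose 𝒜 y),
      (DirectSum.decompose 𝒜 y j : A) * t := by
    rw [← Finset.sum_mul, DirectSum.sum_support_decompose]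
  rw [key, dec_sum]
  have hterm : ∀ j : ℕ, (DirectSum.decompose 𝒜 ((DirectSum.decompose 𝒜 y j : A) * t) m : A)
      = if j + l = m then (DirectSum.decompose 𝒜 y j : A) * t else 0 := by
    intro j
    have hmem : (DirectSum.decompose 𝒜 y j : A) * t ∈ 𝒜 (j + l) :=
      SetLike.mul_mem_graded (SetLike.coe_mem _) ht
    split_ifs with h
    · rw [← h]; exact DirectSum.decompose_of_mem_same 𝒜 hmem
    · exact DirectSum.decompose_of_mem_ne 𝒜 hmem h
  simp_rw [hterm]
  by_cases hlm : l ≤ m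
  · have hcond : ∀ j : ℕ, (j + l = m) = (j = m - l) := by
      intro j; apply propext; omega
    simp_rw [hcond]
    rw [Finset.sum_ite_eq' (DFinsupp.support (DirectSum.decompose 𝒜 y)) (m - l)
      (fun j => (DirectSum.decompose 𝒜 y j : A) * t)]
    rw [if_pos hlm]
    split_ifs with hmem2
    · rfl
    · rw [DFinsupp.notMem_support_iff.mp hmem2]; simp
  · rw [if_neg hlm]
    apply Finset.sum_eq_zero; intro j _; rw [if_neg]; omega

private lemma midDecomp {i j : ℕ} {u w : A} (hu : u ∈ 𝒜 i) (hw : w ∈ 𝒜 j) (y : A) (l : ℕ) :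
    (DirectSum.decompose 𝒜 (u * y * w) (i + l + j) : A)
      = u * (DirectSum.decompose 𝒜 y l : A) * w := by
  rw [rightHomog 𝒜 hw (u * y) (i + l + j), if_pos (by omega)]
  have h1 : i + l + j - j = i + l := by omega
  rw [h1, leftHomog 𝒜 hu y (i + l), if_pos (by omega)]
  have h2 : i + l - i = l := by omega
  rw [h2]

private lemma mulDecompMem (N : Submodule k A) (x y : A) (m : ℕ)
    (h : ∀ i j : ℕ, i + j = m →
      (DirectSum.decompose 𝒜 x i : A) * (DirectSum.decompose 𝒜 y j : A) ∈ N) :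
    (DirectSum.decompose 𝒜 (x * y) m : A) ∈ N := by
  classical
  have key : x * y = ∑ i ∈ DFinsupp.support (DirectSum.decompose 𝒜 x),
      (DirectSum.decompose 𝒜 x i : A) * y := by
    rw [← Finset.sum_mul, DirectSum.sum_support_decompose]
  rw [key, dec_sum]
  apply Submodule.sum_mem
  intro i _
  rw [leftHomog 𝒜 (SetLike.coe_mem _) y m]
  split_ifs with hle
  · exact h i (m - i) (by omega)
  · exact N.zero_mem

private lemma tripleDecompMem (N : Submodule k A) {l : ℕ} {t : A} (ht : t ∈ 𝒜 l)
    (p q : A) (m : ℕ)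
    (h : ∀ i j : ℕ, i + l + j = m →
      (DirectSum.decompose 𝒜 p i : A) * t * (DirectSum.decompose 𝒜 q j : A) ∈ N) :
    (DirectSum.decompose 𝒜 (p * t * q) m : A) ∈ N := by
  classical
  have key : p * t * q = ∑ i ∈ DFinsupp.support (DirectSum.decompose 𝒜 p),
      (DirectSum.decompose 𝒜 p i : A) * t * q := by
    conv_lhs => rw [← DirectSum.sum_support_decompose 𝒜 p]
    rw [Finset.sum_mul, Finset.sum_mul]
  rw [key, dec_sum]
  apply Submodule.sum_mem
  intro i _
  have hmem : (DirectSum.decompose 𝒜 p i : A) * t ∈ 𝒜 (i + l) :=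
    SetLike.mul_mem_graded (SetLike.coe_mem _) ht
  rw [leftHomog 𝒜 hmem q m]
  split_ifs with hle
  · exact h i (m - (i + l)) (by omega)
  · exact N.zero_mem

/-- `x` is concentrated in degrees `≡ γ [MOD n]`. -/
private def AclP (n γ : ℕ) (x : A) : Prop :=
  ∀ m : ℕ, m % n ≠ γ % n → (DirectSum.decompose 𝒜 x m : A) = 0

private lemma aclP_congr {n γ δ : ℕ} {x : A} (h : γ % n = δ % n) (hx : AclP 𝒜 n γ x) :
    AclP 𝒜 n δ x := fun m hm => hx m (by rw [h]; exact hm)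

private lemma aclP_of_mem {n i : ℕ} {x : A} (hx : x ∈ 𝒜 i) : AclP 𝒜 n i x := by
  intro m hm
  exact DirectSum.decompose_of_mem_ne 𝒜 hx (fun h => hm (by rw [h]))

private lemma aclP_mul {n γ δ : ℕ} {x y : A} (hx : AclP 𝒜 n γ x) (hy : AclP 𝒜 n δ y) :
    AclP 𝒜 n (γ + δ) (x * y) := by
  intro m hm
  have hmem : (DirectSum.decompose 𝒜 (x * y) m : A) ∈ (⊥ : Submodule k A) := by
    apply mulDecompMem
    intro i j hij
    by_cases hi : i % n = γ % n
    · have hj : j % n ≠ δ % n := by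
        intro hjeq
        apply hm
        rw [← hij, Nat.add_mod, hi, hjeq, ← Nat.add_mod]
      rw [hy j hj, mul_zero]; exact Submodule.zero_mem _
    · rw [hx i hi, zero_mul]; exact Submodule.zero_mem _
  simpa using hmem

end Helpers

theorem veronese_projectively_simple
    (k : Type*) [Field k] {A : Type*} [Ring A] [Algebra k A]
    (𝒜 : ℕ → Submodule k A) [GradedAlgebra 𝒜]
    (hlf : ∀ n, FiniteDimensional k (𝒜 n))
    (hNoethA : IsNoetherianRing A) (hNoethAop : IsNoetherianRing Aᵐᵒᵖ)
    -- `A` is prime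
    (hprimeA : ∀ a b : A, (∀ x : A, a * x * b = 0) → a = 0 ∨ b = 0)
    -- `A` is projectively simple
    (hpsA : SubProjSimple 𝒜 ⊤)
    (n : ℕ) (hn : 2 ≤ n)
    -- `B` is the `n`-th Veronese subring `A^{(n)} = ⊕_i A_{n i}`
    (B : Subalgebra k A)
    (hB : ∀ x : A, x ∈ B ↔ ∀ m : ℕ, ¬ (n ∣ m) → (DirectSum.decompose 𝒜 x m : A) = 0)
    -- `B` is a prime ring
    (hBprime : ∀ a ∈ B, ∀ b ∈ B, (∀ x ∈ B, a * x * b = 0) → a = 0 ∨ b = 0)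
    -- `A` is finitely generated as a right `B`-module or as a left `B`-module
    (hfg : (∃ S : Finset A, ∀ a : A,
              a ∈ AddSubgroup.closure {y : A | ∃ s ∈ S, ∃ b ∈ B, y = s * b}) ∨
           (∃ S : Finset A, ∀ a : A,
              a ∈ AddSubgroup.closure {y : A | ∃ s ∈ S, ∃ b ∈ B, y = b * s})) :
    SubProjSimple 𝒜 B := by
  classical
  have hn0 : 0 < n := by omega
  constructor
  · -- B is infinite dimensional
    intro hFD
    apply hpsA.1
    have hA : FiniteDimensional k A := by
      rcases hfg with ⟨S, hS⟩ | ⟨S, hS⟩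
      · let φ : ({x // x ∈ S} → ↥B) →ₗ[k] A :=
          ∑ s : {x // x ∈ S}, (LinearMap.mulLeft k (s : A)) ∘ₗ
            (B.val.toLinearMap ∘ₗ LinearMap.proj s)
        have hφ : ∀ f, φ f = ∑ s : {x // x ∈ S}, (s : A) * ((f s : A)) := by
          intro f
          simp [φ, LinearMap.sum_apply]
        have hsurj : Function.Surjective φ := by
          intro a
          have hle : AddSubgroup.closure {y : A | ∃ s ∈ S, ∃ b ∈ B, y = s * b}
              ≤ (LinearMap.range φ).toAddSubgroup := by
            rw [AddSubgroup.closure_le]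
            rintro y ⟨s, hs, b, hb, rfl⟩
            refine ⟨Pi.single ⟨s, hs⟩ ⟨b, hb⟩, ?_⟩
            rw [hφ]
            rw [Finset.sum_eq_single (⟨s, hs⟩ : {x // x ∈ S})]
            · simp
            · intro s' _ hne
              rw [Pi.single_eq_of_ne hne]
              simp
            · intro habs; exact absurd (Finset.mem_univ _) habs
          exact (hle (hS a) : a ∈ LinearMap.range φ)
        exact Module.Finite.of_surjective φ hsurj
      · let φ : ({x // x ∈ S} → ↥B) →ₗ[k] A :=
          ∑ s : {x // x ∈ S}, (LinearMap.mulRight k (s : A)) ∘ₗ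
            (B.val.toLinearMap ∘ₗ LinearMap.proj s)
        have hφ : ∀ f, φ f = ∑ s : {x // x ∈ S}, ((f s : A)) * (s : A) := by
          intro f
          simp [φ, LinearMap.sum_apply]
        have hsurj : Function.Surjective φ := by
          intro a
          have hle : AddSubgroup.closure {y : A | ∃ s ∈ S, ∃ b ∈ B, y = b * s}
              ≤ (LinearMap.range φ).toAddSubgroup := by
            rw [AddSubgroup.closure_le]
            rintro y ⟨s, hs, b, hb, rfl⟩
            refine ⟨Pi.single ⟨s, hs⟩ ⟨b, hb⟩, ?_⟩
            rw [hφ]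
            rw [Finset.sum_eq_single (⟨s, hs⟩ : {x // x ∈ S})]
            · simp
            · intro s' _ hne
              rw [Pi.single_eq_of_ne hne]
              simp
            · intro habs; exact absurd (Finset.mem_univ _) habs
          exact (hle (hS a) : a ∈ LinearMap.range φ)
        exact Module.Finite.of_surjective φ hsurj
    exact (Subalgebra.topEquiv (R := k) (A := A)).symm.toLinearEquiv.finiteDimensional
  · -- PART 2
    intro I hIle hIne hIdeal hIgr
    -- basic Acl ↔ B facts
    have memB_of_acl : ∀ {γ : ℕ} {z : A}, AclP 𝒜 n γ z → γ % n = 0 → z ∈ B := by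
      intro γ z hz hγ
      rw [hB]
      intro m hm
      refine hz m ?_
      rw [hγ]
      intro h0
      exact hm (Nat.dvd_of_mod_eq_zero h0)
    have acl_of_B : ∀ {z : A}, z ∈ B → AclP 𝒜 n 0 z := by
      intro z hz m hm
      refine (hB z).mp hz m ?_
      intro hdvd
      apply hm
      rw [Nat.zero_mod]
      exact Nat.mod_eq_zero_of_dvd hdvd
    obtain ⟨x, hxI, hx0⟩ : ∃ x ∈ I, x ≠ 0 := by
      rcases Submodule.ne_bot_iff I |>.mp hIne with ⟨x, h1, h2⟩
      exact ⟨x, h1, h2⟩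
    have hxB : x ∈ B := hIle hxI
    have hsum : ∀ c : ℕ, c < n → (c + (n - c) % n) % n = 0 := by
      intro c hc
      rcases Nat.eq_zero_or_pos c with h0 | hpos
      · subst h0
        simp [Nat.mod_self]
      · rw [Nat.mod_eq_of_lt (by omega : n - c < n)]
        rw [show c + (n - c) = n from by omega, Nat.mod_self]
    -- construction of the κ's
    have hkappa : ∀ c : ℕ, c < n → ∃ z : A, z ≠ 0 ∧ z ∈ B ∧
        (∀ u w : A, AclP 𝒜 n c u → AclP 𝒜 n ((n - c) % n) w → u * z * w ∈ I) := by
      intro c hc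
      by_cases hcase : ∀ u w : A, AclP 𝒜 n c u → AclP 𝒜 n ((n - c) % n) w → u * x * w = 0
      · exact ⟨x, hx0, hxB, fun u w hu hw => by rw [hcase u w hu hw]; exact I.zero_mem⟩
      · push_neg at hcase
        obtain ⟨u, w, hu, hw, huxw⟩ := hcase
        have hzB : u * x * w ∈ B := by
          refine memB_of_acl (γ := c + 0 + (n - c) % n)
            (aclP_mul 𝒜 (aclP_mul 𝒜 hu (acl_of_B hxB)) hw) ?_
          simpa using hsum c hc
        have hex : ∃ y ∈ B, (u * x * w) * y * x ≠ 0 := by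
          by_contra hall
          push_neg at hall
          rcases hBprime _ hzB _ hxB (fun y hy => hall y hy) with h | h
          · exact huxw h
          · exact hx0 h
        obtain ⟨β, hβB, hβ0⟩ := hex
        have hz2B : (u * x * w) * β * x ∈ B := mul_mem (mul_mem hzB hβB) hxB
        have hex2 : ∃ y ∈ B, ((u * x * w) * β * x) * y * (u * x * w) ≠ 0 := by
          by_contra hall
          push_neg at hall
          rcases hBprime _ hz2B _ hzB (fun y hy => hall y hy) with h | h
          · exact hβ0 h
          · exact huxw h
        obtain ⟨β', hβ'B, hβ'0⟩ := hex2
        have hyI : β * x * β' ∈ I := (hIdeal β' hβ'B _ (hIdeal β hβB x hxI).1).2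
        have hyB : β * x * β' ∈ B := hIle hyI
        refine ⟨w * (β * x * β') * u, ?_, ?_, ?_⟩
        · intro h0
          apply hβ'0
          have e : ((u * x * w) * β * x) * β' * (u * x * w)
              = (u * x) * (w * (β * x * β') * u) * (x * w) := by
            simp only [mul_assoc]
          rw [e, h0, mul_zero, zero_mul]
        · refine memB_of_acl (γ := (n - c) % n + 0 + c)
            (aclP_mul 𝒜 (aclP_mul 𝒜 hw (acl_of_B hyB)) hu) ?_
          simp only [Nat.add_zero]
          rw [Nat.add_comm]
          exact hsum c hc
        · intro u₂ w₂ hu₂ hw₂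
          have e : u₂ * (w * (β * x * β') * u) * w₂
              = (u₂ * w) * (β * x * β') * (u * w₂) := by
            simp only [mul_assoc]
          rw [e]
          have h1 : u₂ * w ∈ B :=
            memB_of_acl (aclP_mul 𝒜 hu₂ hw) (hsum c hc)
          have h2 : u * w₂ ∈ B :=
            memB_of_acl (aclP_mul 𝒜 hu hw₂) (hsum c hc)
          exact (hIdeal _ h2 _ (hIdeal _ h1 _ hyI).1).2
    -- chain: a single d that works for all residues
    have hchain : ∀ c : ℕ, c < n → ∃ d : A, d ≠ 0 ∧ d ∈ B ∧
        (∀ γ : ℕ, γ ≤ c → ∀ u w : A, AclP 𝒜 n γ u → AclP 𝒜 n ((n - γ) % n) w →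
          u * d * w ∈ I) := by
      intro c
      induction c with
      | zero =>
        intro h0
        obtain ⟨z, hz0, hzB, hzP⟩ := hkappa 0 h0
        refine ⟨z, hz0, hzB, ?_⟩
        intro γ hγ u w hu hw
        have : γ = 0 := Nat.le_zero.mp hγ
        subst this
        exact hzP u w hu hw
      | succ c ih =>
        intro hc1
        obtain ⟨d, hd0, hdB, hdP⟩ := ih (by omega)
        obtain ⟨z, hz0, hzB, hzP⟩ := hkappa (c + 1) hc1
        have hex : ∃ y ∈ B, d * y * z ≠ 0 := by
          by_contra hall
          push_neg at hall
          rcases hBprime d hdB z hzB (fun y hy => hall y hy) with h | h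
          · exact hd0 h
          · exact hz0 h
        obtain ⟨β, hβB, hβ0⟩ := hex
        refine ⟨d * β * z, hβ0, mul_mem (mul_mem hdB hβB) hzB, ?_⟩
        intro γ hγ u w hu hw
        rcases Nat.lt_or_ge γ (c + 1) with hlt | hge
        · have e : u * (d * β * z) * w = u * d * (β * (z * w)) := by
            simp only [mul_assoc]
          rw [e]
          apply hdP γ (by omega) u _ hu
          have h1 : AclP 𝒜 n (0 + (0 + (n - γ) % n)) (β * (z * w)) :=
            aclP_mul 𝒜 (acl_of_B hβB) (aclP_mul 𝒜 (acl_of_B hzB) hw)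
          exact aclP_congr 𝒜 (by simp) h1
        · have hγe : γ = c + 1 := by omega
          subst hγe
          have e : u * (d * β * z) * w = (u * (d * β)) * z * w := by
            simp only [mul_assoc]
          rw [e]
          apply hzP _ w _ hw
          have h1 : AclP 𝒜 n ((c + 1) + (0 + 0)) (u * (d * β)) :=
            aclP_mul 𝒜 hu (aclP_mul 𝒜 (acl_of_B hdB) (acl_of_B hβB))
          exact aclP_congr 𝒜 (by simp) h1
    obtain ⟨d, hd0, hdB, hdP⟩ := hchain (n - 1) (by omega)
    -- homogeneous version of the property of d
    have hdP' : ∀ i j : ℕ, (i + j) % n = 0 → ∀ u w : A, u ∈ 𝒜 i → w ∈ 𝒜 j →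
        u * d * w ∈ I := by
      intro i j hij u w hu hw
      have hi : i % n < n := Nat.mod_lt _ hn0
      have hj : j % n < n := Nat.mod_lt _ hn0
      apply hdP (i % n) (by omega) u w
      · exact aclP_congr 𝒜 (Nat.mod_mod_of_dvd i dvd_rfl).symm (aclP_of_mem 𝒜 hu)
      · refine aclP_congr 𝒜 ?_ (aclP_of_mem 𝒜 hw)
        have hadd : (i % n + j % n) % n = 0 := by rw [← Nat.add_mod]; exact hij
        have hr : ((n - i % n) % n) % n = (n - i % n) % n := Nat.mod_mod_of_dvd _ dvd_rfl
        rw [hr]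
        rcases Nat.eq_zero_or_pos (i % n) with h0 | hpos
        · rw [h0, Nat.zero_add, Nat.mod_mod_of_dvd _ dvd_rfl] at hadd
          rw [h0, Nat.sub_zero, Nat.mod_self]
          exact hadd
        · rw [Nat.mod_eq_of_lt (by omega : n - i % n < n)]
          rcases Nat.lt_or_ge (i % n + j % n) n with hs | hs
          · rw [Nat.mod_eq_of_lt hs] at hadd
            omega
          · rw [Nat.mod_eq_sub_mod hs, Nat.mod_eq_of_lt (by omega)] at hadd
            omega
    -- the ideal Λ of A generated by (the homogeneous components of) d
    set G : Set A := {z : A | ∃ p q : A, ∃ l : ℕ, z = p * (DirectSum.decompose 𝒜 d l : A) * q}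
      with hGdef
    set Λ : Submodule k A := Submodule.span k G with hΛdef
    have hdΛ : d ∈ Λ := by
      have hsum' : (∑ l ∈ DFinsupp.support (DirectSum.decompose 𝒜 d),
          (DirectSum.decompose 𝒜 d l : A)) ∈ Λ := by
        apply Submodule.sum_mem
        intro l _
        apply Submodule.subset_span
        exact ⟨1, 1, l, by rw [one_mul, mul_one]⟩
      rwa [DirectSum.sum_support_decompose] at hsum'
    have hΛne : Λ ≠ ⊥ := by
      intro h
      rw [h, Submodule.mem_bot] at hdΛ
      exact hd0 hdΛ
    have hΛideal : ∀ b ∈ (⊤ : Subalgebra k A), ∀ t ∈ Λ, b * t ∈ Λ ∧ t * b ∈ Λ := by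
      intro b _ t ht
      constructor
      · have hmap : Λ.map (LinearMap.mulLeft k b) ≤ Λ := by
          rw [hΛdef, Submodule.map_span]
          apply Submodule.span_mono
          rintro z ⟨z', ⟨p, q, l, rfl⟩, rfl⟩
          exact ⟨b * p, q, l, by simp only [LinearMap.mulLeft_apply, mul_assoc]⟩
        exact hmap ⟨t, ht, rfl⟩
      · have hmap : Λ.map (LinearMap.mulRight k b) ≤ Λ := by
          rw [hΛdef, Submodule.map_span]
          apply Submodule.span_mono
          rintro z ⟨z', ⟨p, q, l, rfl⟩, rfl⟩
          exact ⟨p, q * b, l, by simp only [LinearMap.mulRight_apply, mul_assoc]⟩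
        exact hmap ⟨t, ht, rfl⟩
    have hΛgr : ∀ t ∈ Λ, ∀ m : ℕ, (DirectSum.decompose 𝒜 t m : A) ∈ Λ := by
      intro t ht m
      have hsub : Λ ≤ Λ.comap (Lm 𝒜 m) := by
        rw [hΛdef, Submodule.span_le]
        rintro z ⟨p, q, l, rfl⟩
        simp only [SetLike.mem_coe, Submodule.mem_comap, Lm_apply]
        apply tripleDecompMem 𝒜 _ (SetLike.coe_mem (DirectSum.decompose 𝒜 d l)) p q m
        intro i j _
        apply Submodule.subset_span
        exact ⟨(DirectSum.decompose 𝒜 p i : A), (DirectSum.decompose 𝒜 q j : A), l, rfl⟩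
      exact hsub ht
    -- intersection of Λ with B is inside I
    have key7 : ∀ t ∈ Λ, ∀ m : ℕ, m % n = 0 → (DirectSum.decompose 𝒜 t m : A) ∈ I := by
      intro t ht m hm
      have hsub : Λ ≤ I.comap (Lm 𝒜 m) := by
        rw [hΛdef, Submodule.span_le]
        rintro z ⟨p, q, l, rfl⟩
        simp only [SetLike.mem_coe, Submodule.mem_comap, Lm_apply]
        apply tripleDecompMem 𝒜 _ (SetLike.coe_mem (DirectSum.decompose 𝒜 d l)) p q m
        intro i j hij
        by_cases hl : l % n = 0
        · have e := midDecomp 𝒜 (SetLike.coe_mem (DirectSum.decompose 𝒜 p i))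
            (SetLike.coe_mem (DirectSum.decompose 𝒜 q j)) d l
          rw [hij] at e
          rw [← e]
          apply hIgr
          apply hdP' i j ?_ _ _ (SetLike.coe_mem _) (SetLike.coe_mem _)
          have h1 : (i + l + j) % n = (i + j) % n := by
            rw [show i + l + j = (i + j) + l from by omega, Nat.add_mod, hl,
              Nat.add_zero, Nat.mod_mod_of_dvd _ dvd_rfl]
          rw [← h1, hij]
          exact hm
        · have hz : (DirectSum.decompose 𝒜 d l : A) = 0 := by
            refine (hB d).mp hdB l ?_
            intro hdvd
            exact hl (Nat.mod_eq_zero_of_dvd hdvd)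
          rw [hz, mul_zero, zero_mul]
          exact I.zero_mem
      exact hsub ht
    have hΛB : ∀ t ∈ Λ, t ∈ B → t ∈ I := by
      intro t ht htB
      have hrw : t = ∑ m ∈ DFinsupp.support (DirectSum.decompose 𝒜 t),
          (DirectSum.decompose 𝒜 t m : A) := (DirectSum.sum_support_decompose 𝒜 t).symm
      rw [hrw]
      apply Submodule.sum_mem
      intro m _
      by_cases h : m % n = 0
      · exact key7 t ht m h
      · rw [(hB t).mp htB m (fun hdvd => h (Nat.mod_eq_zero_of_dvd hdvd))]
        exact I.zero_mem
    -- apply projective simplicity of A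
    have hFDtop := hpsA.2 Λ (by rw [Algebra.top_toSubmodule]; exact le_top) hΛne hΛideal hΛgr
    -- transfer finite-dimensionality down to B / I
    have hBT : B.toSubmodule ≤ (⊤ : Subalgebra k A).toSubmodule := by
      intro y _
      simp [Algebra.mem_top]
    let χ : B.toSubmodule →ₗ[k]
        ((⊤ : Subalgebra k A).toSubmodule ⧸ Λ.comap (⊤ : Subalgebra k A).toSubmodule.subtype) :=
      (Λ.comap (⊤ : Subalgebra k A).toSubmodule.subtype).mkQ ∘ₗ Submodule.inclusion hBT
    have hker : ∀ b : B.toSubmodule, χ b = 0 ↔ (b : A) ∈ Λ := by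
      intro b
      change Submodule.Quotient.mk (Submodule.inclusion hBT b) = 0 ↔ _
      rw [Submodule.Quotient.mk_eq_zero, Submodule.mem_comap]; rfl
    haveI := hFDtop
    have hFD2 : FiniteDimensional k (B.toSubmodule ⧸ LinearMap.ker χ) :=
      (LinearMap.quotKerEquivRange χ).symm.finiteDimensional
    have hle2 : LinearMap.ker χ ≤ I.comap B.toSubmodule.subtype := by
      intro b hb
      have hbΛ : (b : A) ∈ Λ := (hker b).mp hb
      exact hΛB _ hbΛ b.2
    let q : (B.toSubmodule ⧸ LinearMap.ker χ) →ₗ[k]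
        (B.toSubmodule ⧸ I.comap B.toSubmodule.subtype) :=
      Submodule.mapQ _ _ LinearMap.id (by simpa using hle2)
    have hq : Function.Surjective q := by
      intro z
      obtain ⟨y, rfl⟩ := Submodule.Quotient.mk_surjective _ z
      exact ⟨Submodule.Quotient.mk y, by rw [Submodule.mapQ_apply]; rfl⟩
    exact Module.Finite.of_surjective q hq
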